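/- There exist constants C3 > 0 and c > 0 such that, for all sufficiently large n divisible by 4, ∑_{j ∈ ℤ, t0 < |j| ≤ n/8} Pr(G = n/4 − j) · exp( 16·j² / (C3·n·log n) ) ≤ exp( −c·√(log n) ); in particular this sum tends to 0 as n → ∞ along multiples of 4. -/

import Mathlib

open scoped Classical
open Finset Filter

/-- `pG n k` is `Pr(G = k)` for the hypergeometric random variable `G(n, n/2, n/2)`,
extended by `0` outside `{0, …, n/2}` (here `k : ℤ`). -/
noncomputable def pG (n : ℕ) (k : ℤ) : ℝ :=
  if 0 ≤ k then (((n / 2).choose k.toNat : ℝ)) ^ 2 / (n.choose (n / 2) : ℝ) else 0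

/-- `t0 = √n · (log n)^{1/4}`. -/
noncomputable def t0 (n : ℕ) : ℝ := Real.sqrt n * Real.log n ^ ((1 : ℝ) / 4)

/-- The tail sum `∑_{t0 < |j| ≤ n/8} Pr(G = n/4 − j) · exp(16j²/(C3 n log n))`. -/
noncomputable def tailSum (C3 : ℝ) (n : ℕ) : ℝ :=
  ∑ j ∈ (Finset.Icc (-(n : ℤ)) (n : ℤ)).filter
      (fun j : ℤ => t0 n < |(j : ℝ)| ∧ |(j : ℝ)| ≤ (n : ℝ) / 8),
    pG n (((n / 4 : ℕ) : ℤ) - j) * Real.exp (16 * (j : ℝ) ^ 2 / (C3 * n * Real.log n))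

set_option maxHeartbeats 1000000


/-- Upper bound: `C(2h, h-a) ≤ C(2h,h) · exp(-2a²/(3h))` for `2a ≤ h`. -/
lemma choose_upper (h : ℕ) : ∀ a : ℕ, 2*a ≤ h →
    ((2*h).choose (h - a) : ℝ) ≤ ((2*h).choose h : ℝ) * Real.exp (-(2*(a:ℝ)^2) / (3*h)) := by
  intro a
  induction a with
  | zero => intro _; simp
  | succ a ih =>
    intro ha
    push_cast
    have ha' : 2*a ≤ h := by omega
    have hh : 0 < h := by omega
    have hhR : (0:ℝ) < h := by exact_mod_cast hh
    have haleh : a ≤ h := by omega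
    -- the recurrence
    have e1 : h - (a+1) + 1 = h - a := by omega
    have e2 : 2*h - (h - (a+1)) = h + a + 1 := by omega
    have hnat := Nat.choose_succ_right_eq (2*h) (h - (a+1))
    rw [e1, e2] at hnat
    have hid : ((2*h).choose (h - a) : ℝ) * ((h:ℝ) - a)
        = ((2*h).choose (h - (a+1)) : ℝ) * ((h:ℝ) + a + 1) := by
      have := congrArg (Nat.cast : ℕ → ℝ) hnat
      push_cast [Nat.cast_sub haleh] at this
      linarith [this]
    have hpos : (0:ℝ) < (h:ℝ) + a + 1 := by positivity
    have hval : ((2*h).choose (h - (a+1)) : ℝ)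
        = ((2*h).choose (h - a) : ℝ) * (((h:ℝ) - a) / ((h:ℝ) + a + 1)) := by
      field_simp
      linarith [hid]
    -- bound the ratio
    have hratio : ((h:ℝ) - a) / ((h:ℝ) + a + 1) ≤ Real.exp (-(2*(2*(a:ℝ)+1)) / (3*h)) := by
      have hx : ((h:ℝ) - a) / ((h:ℝ) + a + 1) = 1 - (2*(a:ℝ)+1)/((h:ℝ)+a+1) := by
        field_simp; ring
      have h1 : 1 - (2*(a:ℝ)+1)/((h:ℝ)+a+1) ≤ Real.exp (-((2*(a:ℝ)+1)/((h:ℝ)+a+1))) := by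
        have := Real.add_one_le_exp (-((2*(a:ℝ)+1)/((h:ℝ)+a+1)))
        linarith
      have h2 : Real.exp (-((2*(a:ℝ)+1)/((h:ℝ)+a+1))) ≤ Real.exp (-(2*(2*(a:ℝ)+1)) / (3*h)) := by
        apply Real.exp_le_exp.mpr
        rw [neg_div, neg_le_neg_iff]
        rw [div_le_div_iff₀ (by positivity) hpos]
        have : 2*(a:ℝ) + 2 ≤ h := by
          have : ((2*(a+1) : ℕ) : ℝ) ≤ (h:ℝ) := by exact_mod_cast ha
          push_cast at this; linarith
        nlinarith
      rw [hx]; linarith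
    have hc0 : (0:ℝ) ≤ ((2*h).choose (h - a) : ℝ) := by positivity
    have hr0 : (0:ℝ) ≤ ((h:ℝ) - a) / ((h:ℝ) + a + 1) := by
      apply div_nonneg _ (le_of_lt hpos)
      have : (a:ℝ) ≤ h := by exact_mod_cast haleh
      linarith
    calc ((2*h).choose (h - (a+1)) : ℝ)
        = ((2*h).choose (h - a) : ℝ) * (((h:ℝ) - a) / ((h:ℝ) + a + 1)) := hval
      _ ≤ (((2*h).choose h : ℝ) * Real.exp (-(2*(a:ℝ)^2) / (3*h)))
            * Real.exp (-(2*(2*(a:ℝ)+1)) / (3*h)) := by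
          apply mul_le_mul (ih ha') hratio hr0 (by positivity)
      _ = ((2*h).choose h : ℝ) * Real.exp (-(2*((a:ℝ)+1)^2) / (3*h)) := by
          rw [mul_assoc, ← Real.exp_add]
          congr 1
          field_simp
          ring


/-- Lower bound: `C(2h,h)·exp(-2s²/h) ≤ C(2h, h-s)` for `4s ≤ h`. -/
lemma choose_lower (h : ℕ) : ∀ s : ℕ, 4*s ≤ h →
    ((2*h).choose h : ℝ) * Real.exp (-(2*(s:ℝ)^2) / h) ≤ ((2*h).choose (h - s) : ℝ) := by
  intro s
  induction s with
  | zero => intro _; simp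
  | succ s ih =>
    intro hs
    push_cast
    have hs' : 4*s ≤ h := by omega
    have hh : 0 < h := by omega
    have hhR : (0:ℝ) < h := by exact_mod_cast hh
    have hsleh : s ≤ h := by omega
    have e1 : h - (s+1) + 1 = h - s := by omega
    have e2 : 2*h - (h - (s+1)) = h + s + 1 := by omega
    have hnat := Nat.choose_succ_right_eq (2*h) (h - (s+1))
    rw [e1, e2] at hnat
    have hid : ((2*h).choose (h - s) : ℝ) * ((h:ℝ) - s)
        = ((2*h).choose (h - (s+1)) : ℝ) * ((h:ℝ) + s + 1) := by
      have := congrArg (Nat.cast : ℕ → ℝ) hnat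
      push_cast [Nat.cast_sub hsleh] at this
      linarith [this]
    have hpos : (0:ℝ) < (h:ℝ) + s + 1 := by positivity
    have hval : ((2*h).choose (h - (s+1)) : ℝ)
        = ((2*h).choose (h - s) : ℝ) * (((h:ℝ) - s) / ((h:ℝ) + s + 1)) := by
      field_simp
      linarith [hid]
    -- ratio lower bound:  exp(-2(2s+1)/h) ≤ (h-s)/(h+s+1)
    have hsR : 4*(s:ℝ) + 4 ≤ (h:ℝ) := by
      have : ((4*(s+1) : ℕ) : ℝ) ≤ (h:ℝ) := by exact_mod_cast hs
      push_cast at this; linarith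
    have hratio : Real.exp (-(2*(2*(s:ℝ)+1)) / h) ≤ ((h:ℝ) - s) / ((h:ℝ) + s + 1) := by
      set x : ℝ := (2*(s:ℝ)+1)/h with hxdef
      have hx0 : 0 ≤ x := by positivity
      have hxhalf : x ≤ 1/2 := by
        rw [hxdef, div_le_iff₀ hhR]; linarith
      have e1 : Real.exp (-(2*(2*(s:ℝ)+1)) / h) = Real.exp (-(2*x)) := by
        rw [hxdef]; congr 1; field_simp
      have h1 : Real.exp (-(2*x)) ≤ 1/(1+2*x) := by
        rw [Real.exp_neg]
        have h2x : 1 + 2*x ≤ Real.exp (2*x) := by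
          have := Real.add_one_le_exp (2*x); linarith
        have hp : (0:ℝ) < 1 + 2*x := by linarith
        rw [inv_eq_one_div]
        exact one_div_le_one_div_of_le hp h2x
      have h2 : 1/(1+2*x) ≤ 1 - x := by
        rw [div_le_iff₀ (by linarith)]
        nlinarith
      have h3 : 1 - x ≤ ((h:ℝ) - s) / ((h:ℝ) + s + 1) := by
        rw [le_div_iff₀ hpos, hxdef]
        have hexp : (2*(s:ℝ)+1)/h * ((h:ℝ) + s + 1) = (2*(s:ℝ)+1) * (((h:ℝ)+s+1)/h) := by ring
        have : (1:ℝ) ≤ ((h:ℝ)+s+1)/h := by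
          rw [le_div_iff₀ hhR]; push_cast; linarith [Nat.cast_nonneg (α := ℝ) s]
        nlinarith [this, hhR]
      rw [e1]; linarith
    have hc0 : (0:ℝ) ≤ ((2*h).choose h : ℝ) := by positivity
    calc ((2*h).choose h : ℝ) * Real.exp (-(2*((s:ℝ)+1)^2) / h)
        = (((2*h).choose h : ℝ) * Real.exp (-(2*(s:ℝ)^2) / h)) * Real.exp (-(2*(2*(s:ℝ)+1)) / h) := by
          rw [mul_assoc, ← Real.exp_add]; congr 2; field_simp; ring
      _ ≤ ((2*h).choose (h - s) : ℝ) * (((h:ℝ) - s) / ((h:ℝ) + s + 1)) := by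
          apply mul_le_mul (ih hs') hratio (by positivity) (by positivity)
      _ = ((2*h).choose (h - (s+1)) : ℝ) := hval.symm


lemma choose_mono_mid (h : ℕ) : ∀ l k, k ≤ l → l ≤ h →
    (2*h).choose k ≤ (2*h).choose l := by
  intro l
  induction l with
  | zero =>
    intro k hk _
    interval_cases k
    exact le_refl _
  | succ l ih =>
    intro k hk hl
    rcases Nat.lt_or_ge k (l+1) with hlt | hge
    · have h1 : (2*h).choose k ≤ (2*h).choose l := ih k (by omega) (by omega)
      have h2 : (2*h).choose l ≤ (2*h).choose (l+1) := by
        apply Nat.choose_le_succ_of_lt_half_left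
        omega
      exact h1.trans h2
    · have : k = l + 1 := by omega
      subst this; exact le_refl _

/-- Vandermonde lower bound: `(s+1) · C(2h, h-s)² ≤ C(4h, 2h)` for `s ≤ h`. -/
lemma vander (h s : ℕ) (hs : s ≤ h) :
    ((s:ℝ)+1) * ((2*h).choose (h - s) : ℝ)^2 ≤ ((4*h).choose (2*h) : ℝ) := by
  have key : (s+1) * ((2*h).choose (h - s))^2 ≤ (4*h).choose (2*h) := by
    have hvdm : (4*h).choose (2*h)
        = ∑ ij ∈ antidiagonal (2*h), (2*h).choose ij.1 * (2*h).choose ij.2 := by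
      have := Nat.add_choose_eq (2*h) (2*h) (2*h)
      rwa [show 2*h + 2*h = 4*h by ring] at this
    set S : Finset (ℕ × ℕ) := (range (s+1)).image (fun a => (h - a, h + a)) with hS
    have hsub : S ⊆ antidiagonal (2*h) := by
      intro p hp
      simp only [hS, mem_image, mem_range] at hp
      obtain ⟨a, ha, rfl⟩ := hp
      rw [Finset.HasAntidiagonal.mem_antidiagonal]
      omega
    have hinj : ∀ x ∈ range (s+1), ∀ y ∈ range (s+1),
        (fun a => (h - a, h + a)) x = (fun a => (h - a, h + a)) y → x = y := by
      intro x _ y _ hxy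
      simp only [Prod.mk.injEq] at hxy
      omega
    have h1 : ∑ p ∈ S, (2*h).choose p.1 * (2*h).choose p.2
        ≤ ∑ ij ∈ antidiagonal (2*h), (2*h).choose ij.1 * (2*h).choose ij.2 :=
      Finset.sum_le_sum_of_subset hsub
    have h2 : ∑ p ∈ S, (2*h).choose p.1 * (2*h).choose p.2
        = ∑ a ∈ range (s+1), (2*h).choose (h - a) * (2*h).choose (h + a) := by
      rw [hS, Finset.sum_image hinj]
    have h3 : ∀ a ∈ range (s+1),
        (s+1-s) * ((2*h).choose (h - s))^2 ≤ (2*h).choose (h - a) * (2*h).choose (h + a) := by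
      intro a ha
      rw [mem_range] at ha
      have hsym : (2*h).choose (h + a) = (2*h).choose (h - a) := by
        have := Nat.choose_symm (show h + a ≤ 2*h by omega)
        rw [show 2*h - (h+a) = h - a by omega] at this
        exact this.symm
      rw [hsym, show s+1-s = 1 by omega, one_mul, pow_two]
      have hmono : (2*h).choose (h - s) ≤ (2*h).choose (h - a) :=
        choose_mono_mid h (h - a) (h - s) (by omega) (by omega)
      exact Nat.mul_le_mul hmono hmono
    have h4 : (s+1) * ((2*h).choose (h - s))^2
        ≤ ∑ a ∈ range (s+1), (2*h).choose (h - a) * (2*h).choose (h + a) := by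
      calc (s+1) * ((2*h).choose (h - s))^2
          = ∑ _a ∈ range (s+1), ((2*h).choose (h - s))^2 := by
            rw [Finset.sum_const, card_range, smul_eq_mul]
        _ ≤ _ := by
            apply Finset.sum_le_sum
            intro a ha
            have := h3 a ha
            rwa [show s+1-s = 1 by omega, one_mul] at this
    exact h4.trans (h2 ▸ (h1.trans hvdm.ge))
  calc ((s:ℝ)+1) * ((2*h).choose (h - s) : ℝ)^2
      = (((s+1) * ((2*h).choose (h - s))^2 : ℕ) : ℝ) := by push_cast; ring
    _ ≤ ((4*h).choose (2*h) : ℝ) := by exact_mod_cast key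

lemma pGmax_le (n h : ℕ) (hn : n = 4*h) (h256 : 256 ≤ n) :
    ((2*h).choose h : ℝ)^2 / ((4*h).choose (2*h) : ℝ) ≤ Real.exp 16 / Real.sqrt n := by
  set s := Nat.sqrt n with hsdef
  have hs16 : 16 ≤ s := Nat.le_sqrt.mpr (by omega)
  have hss : s * s ≤ n := Nat.sqrt_le n
  have h4s : 4*s ≤ h := by nlinarith
  have hsh : s ≤ h := by omega
  have hh : 0 < h := by omega
  have hhR : (0:ℝ) < h := by exact_mod_cast hh
  -- exponent bound
  have hexp : Real.exp (-8) ≤ Real.exp (-(2*(s:ℝ)^2) / h) := by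
    apply Real.exp_le_exp.mpr
    rw [neg_div, neg_le_neg_iff, div_le_iff₀ hhR]
    have : ((s*s : ℕ) : ℝ) ≤ ((n:ℕ) : ℝ) := by exact_mod_cast hss
    push_cast at this
    have hnR : (n:ℝ) = 4*h := by exact_mod_cast hn
    nlinarith
  have hcpos : (0:ℝ) < ((2*h).choose h : ℝ) := by
    exact_mod_cast Nat.choose_pos (show h ≤ 2*h by omega)
  have hC4pos : (0:ℝ) < ((4*h).choose (2*h) : ℝ) := by
    exact_mod_cast Nat.choose_pos (show 2*h ≤ 4*h by omega)
  -- lower bound on the central binomial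
  have hlow : ((s:ℝ)+1) * (((2*h).choose h : ℝ) * Real.exp (-8))^2
      ≤ ((4*h).choose (2*h) : ℝ) := by
    have h1 := choose_lower h s h4s
    have h2 := vander h s hsh
    have h3 : (((2*h).choose h : ℝ) * Real.exp (-8))^2
        ≤ ((2*h).choose (h - s) : ℝ)^2 := by
      apply pow_le_pow_left₀ (by positivity)
      calc ((2*h).choose h : ℝ) * Real.exp (-8)
          ≤ ((2*h).choose h : ℝ) * Real.exp (-(2*(s:ℝ)^2) / h) := by
            apply mul_le_mul_of_nonneg_left hexp (le_of_lt hcpos)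
        _ ≤ _ := h1
    calc ((s:ℝ)+1) * (((2*h).choose h : ℝ) * Real.exp (-8))^2
        ≤ ((s:ℝ)+1) * ((2*h).choose (h - s) : ℝ)^2 := by
          apply mul_le_mul_of_nonneg_left h3 (by positivity)
      _ ≤ _ := h2
  -- conclude
  have hsq : Real.sqrt n ≤ (s:ℝ) + 1 := by
    have h1 : (n:ℝ) ≤ ((s:ℝ)+1)^2 := by
      have := Nat.lt_succ_sqrt n
      have : (n:ℝ) < ((s+1 : ℕ):ℝ) * ((s+1 : ℕ):ℝ) := by exact_mod_cast this
      push_cast at this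
      nlinarith
    calc Real.sqrt n ≤ Real.sqrt (((s:ℝ)+1)^2) := Real.sqrt_le_sqrt h1
      _ = (s:ℝ)+1 := Real.sqrt_sq (by positivity)
  have hA : (0:ℝ) < ((s:ℝ)+1) * (((2*h).choose h : ℝ) * Real.exp (-8))^2 := by positivity
  have step1 : ((2*h).choose h : ℝ)^2 / ((4*h).choose (2*h) : ℝ)
      ≤ ((2*h).choose h : ℝ)^2 / (((s:ℝ)+1) * (((2*h).choose h : ℝ) * Real.exp (-8))^2) := by
    apply div_le_div_of_nonneg_left (by positivity) hA hlow
  have step2 : ((2*h).choose h : ℝ)^2 / (((s:ℝ)+1) * (((2*h).choose h : ℝ) * Real.exp (-8))^2)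
      = Real.exp 16 / ((s:ℝ)+1) := by
    rw [mul_pow, ← Real.exp_nat_mul]
    rw [show ((2:ℕ):ℝ) * (-8 : ℝ) = -16 by norm_num]
    rw [Real.exp_neg]
    field_simp
  have hnpos : (0:ℝ) < (n:ℝ) := by
    have : 0 < n := by omega
    exact_mod_cast this
  have step3 : Real.exp 16 / ((s:ℝ)+1) ≤ Real.exp 16 / Real.sqrt n :=
    div_le_div_of_nonneg_left (by positivity) (Real.sqrt_pos.mpr hnpos) hsq
  calc ((2*h).choose h : ℝ)^2 / ((4*h).choose (2*h) : ℝ)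
      ≤ _ := step1
    _ = _ := step2
    _ ≤ _ := step3

lemma sum_abs_geom (n : ℕ) (r : ℝ) (h0 : 0 ≤ r) (h1 : r < 1) :
    ∑ j ∈ Finset.Icc (-(n:ℤ)) (n:ℤ), r ^ j.natAbs ≤ 2/(1-r) := by
  classical
  set A : Finset ℤ := (range (n+1)).image (fun k : ℕ => (k:ℤ)) with hA
  set B : Finset ℤ := (range (n+1)).image (fun k : ℕ => -(k:ℤ)) with hB
  have hsub : Finset.Icc (-(n:ℤ)) (n:ℤ) ⊆ A ∪ B := by
    intro j hj
    rw [Finset.mem_Icc] at hj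
    rw [Finset.mem_union]
    rcases le_or_gt 0 j with hjpos | hjneg
    · left
      rw [hA, Finset.mem_image]
      exact ⟨j.toNat, by rw [mem_range]; omega, by omega⟩
    · right
      rw [hB, Finset.mem_image]
      exact ⟨(-j).toNat, by rw [mem_range]; omega, by omega⟩
  have hgeom : ∑ k ∈ range (n+1), r ^ k ≤ 1/(1-r) := by
    rw [geom_sum_eq (ne_of_lt h1) (n+1)]
    have h1r : (1:ℝ) - r ≠ 0 := by linarith
    have hre : (r^(n+1)-1)/(r-1) = (1-r^(n+1))/(1-r) := by
      rw [div_eq_div_iff (by intro hc; apply h1r; linarith; ) h1r] <;> ring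
    rw [hre, div_le_div_iff₀ (by linarith) (by linarith)]
    have hrp : 0 ≤ r ^ (n+1) := by positivity
    nlinarith
  have hsumA : ∑ j ∈ A, r ^ j.natAbs ≤ 1/(1-r) := by
    rw [hA, Finset.sum_image (by intro x _ y _ hxy; beta_reduce at hxy; exact_mod_cast hxy)]
    simpa using hgeom
  have hsumB : ∑ j ∈ B, r ^ j.natAbs ≤ 1/(1-r) := by
    rw [hB, Finset.sum_image (by intro x _ y _ hxy; beta_reduce at hxy; omega)]
    simpa using hgeom
  have hnn : ∀ j ∈ Finset.Icc (-(n:ℤ)) (n:ℤ) \ (A ∪ B), (0:ℝ) ≤ r ^ j.natAbs := by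
    intro j _; positivity
  calc ∑ j ∈ Finset.Icc (-(n:ℤ)) (n:ℤ), r ^ j.natAbs
      ≤ ∑ j ∈ A ∪ B, r ^ j.natAbs := by
        apply Finset.sum_le_sum_of_subset_of_nonneg hsub
        intro j _ _; positivity
    _ ≤ ∑ j ∈ A, r ^ j.natAbs + ∑ j ∈ B, r ^ j.natAbs := by
        have := Finset.sum_union_inter (s₁ := A) (s₂ := B) (f := fun j : ℤ => r ^ j.natAbs)
        have hin : (0:ℝ) ≤ ∑ j ∈ A ∩ B, r ^ j.natAbs :=
          Finset.sum_nonneg (fun j _ => by positivity)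
        linarith
    _ ≤ 1/(1-r) + 1/(1-r) := add_le_add hsumA hsumB
    _ = 2/(1-r) := by ring

lemma main_bound (n : ℕ) (hn256 : 256 ≤ n) (hL2000 : (2000:ℝ) ≤ Real.log n) (hdvd : 4 ∣ n) :
    tailSum 3 n ≤ Real.exp (-(1/3) * Real.sqrt (Real.log n)) := by
  obtain ⟨h, hn⟩ := hdvd
  have hh0 : 0 < h := by omega
  have hn0 : (0:ℝ) < n := by exact_mod_cast (show 0 < n by omega)
  have hnR : (n:ℝ) = 4*h := by exact_mod_cast hn
  have hhR : (0:ℝ) < h := by exact_mod_cast hh0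
  set u := Real.sqrt n with hudef
  set L := Real.log n with hLdef
  set sL := Real.sqrt L with hsLdef
  have hu2 : u^2 = n := Real.sq_sqrt hn0.le
  have hupos : (0:ℝ) < u := Real.sqrt_pos.mpr hn0
  have hu16 : 16 ≤ u := by
    have h256 : (256:ℝ) ≤ n := by exact_mod_cast hn256
    calc (16:ℝ) = Real.sqrt 256 := by
          rw [show (256:ℝ) = 16^2 by norm_num, Real.sqrt_sq (by norm_num)]
      _ ≤ u := Real.sqrt_le_sqrt h256
  have hL : (2000:ℝ) ≤ L := hL2000
  have hL0 : (0:ℝ) < L := by linarith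
  have hsL2 : sL^2 = L := Real.sq_sqrt hL0.le
  have hsL0 : 0 ≤ sL := Real.sqrt_nonneg _
  have hsL18 : (18:ℝ) ≤ sL := by
    calc (18:ℝ) = Real.sqrt 324 := by
          rw [show (324:ℝ) = 18^2 by norm_num, Real.sqrt_sq (by norm_num)]
      _ ≤ sL := Real.sqrt_le_sqrt (by linarith)
  have ht0sq : t0 n ^ 2 = (n:ℝ) * sL := by
    rw [t0, mul_pow, Real.sq_sqrt hn0.le, hsLdef, hLdef, Real.sqrt_eq_rpow,
      ← Real.rpow_natCast (Real.log n ^ ((1:ℝ)/4)) 2,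
      ← Real.rpow_mul (Real.log_nonneg (by exact_mod_cast (show 1 ≤ n by omega)))]
    norm_num
  have hrpow1 : (1:ℝ) ≤ Real.log n ^ ((1:ℝ)/4) := by
    apply Real.one_le_rpow (by rw [← hLdef]; linarith) (by norm_num)
  have ht0u : u ≤ t0 n := by
    rw [t0, ← hudef]
    calc u = u * 1 := (mul_one u).symm
      _ ≤ u * Real.log n ^ ((1:ℝ)/4) := mul_le_mul_of_nonneg_left hrpow1 hupos.le
  have ht0pos : 0 < t0 n := lt_of_lt_of_le hupos ht0u
  set r := Real.exp (-(4/(3*u))) with hrdef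
  have hr0 : 0 ≤ r := Real.exp_nonneg _
  have hr1 : r < 1 := by
    rw [hrdef, Real.exp_lt_one_iff]
    have : 0 < 4/(3*u) := by positivity
    linarith
  set Q := Real.exp 16 / u * Real.exp (-(4/3) * sL) with hQdef
  have hQ0 : 0 ≤ Q := by positivity
  have hpoint : ∀ j ∈ (Finset.Icc (-(n : ℤ)) (n : ℤ)).filter
      (fun j : ℤ => t0 n < |(j : ℝ)| ∧ |(j : ℝ)| ≤ (n : ℝ) / 8),
      pG n (((n / 4 : ℕ) : ℤ) - j) * Real.exp (16 * (j : ℝ) ^ 2 / (3 * n * L))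
        ≤ Q * r ^ j.natAbs := by
    intro j hj
    rw [Finset.mem_filter] at hj
    obtain ⟨hjmem, hj1, hj2⟩ := hj
    set a := j.natAbs with hadef
    have habs : |(j:ℝ)| = (a:ℝ) := by
      rw [hadef, Nat.cast_natAbs, Int.cast_abs]
    rw [habs] at hj1 hj2
    have h2a : 2*a ≤ h := by
      have : (2*a : ℝ) ≤ (h:ℝ) := by push_cast; rw [hnR] at hj2; linarith
      exact_mod_cast this
    have hah : a ≤ h := by omega
    have hn4 : n / 4 = h := by omega
    have hn2 : n / 2 = 2*h := by omega
    have hk : 0 ≤ ((n/4 : ℕ):ℤ) - j := by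
      rw [hn4]; omega
    have hpGval : pG n (((n / 4 : ℕ) : ℤ) - j)
        = ((2*h).choose (h - a) : ℝ)^2 / ((4*h).choose (2*h) : ℝ) := by
      rw [pG, if_pos hk, hn2, hn4, show n = 4*h from hn]
      congr 2
      rcases Int.natAbs_eq j with hj' | hj'
      · have : ((h:ℤ) - j).toNat = h - a := by omega
        rw [this]
      · have : ((h:ℤ) - j).toNat = h + a := by omega
        rw [this]
        have hsym := Nat.choose_symm (show h + a ≤ 2*h by omega)
        rw [show 2*h - (h+a) = h - a by omega] at hsym
        exact_mod_cast hsym.symm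
    have hC4pos : (0:ℝ) < ((4*h).choose (2*h) : ℝ) := by
      exact_mod_cast Nat.choose_pos (show 2*h ≤ 4*h by omega)
    have hup := choose_upper h a h2a
    have hsq : ((2*h).choose (h - a) : ℝ)^2
        ≤ ((2*h).choose h : ℝ)^2 * Real.exp (-(4*(a:ℝ)^2) / (3*h)) := by
      calc ((2*h).choose (h - a) : ℝ)^2
          ≤ (((2*h).choose h : ℝ) * Real.exp (-(2*(a:ℝ)^2) / (3*h)))^2 := by
            apply pow_le_pow_left₀ (by positivity) hup
        _ = ((2*h).choose h : ℝ)^2 * Real.exp (-(4*(a:ℝ)^2) / (3*h)) := by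
            rw [mul_pow, ← Real.exp_nat_mul]
            congr 2
            push_cast
            field_simp
            ring
    have hpGle : pG n (((n / 4 : ℕ) : ℤ) - j)
        ≤ (Real.exp 16 / u) * Real.exp (-(4*(a:ℝ)^2) / (3*h)) := by
      rw [hpGval]
      calc ((2*h).choose (h - a) : ℝ)^2 / ((4*h).choose (2*h) : ℝ)
          ≤ (((2*h).choose h : ℝ)^2 * Real.exp (-(4*(a:ℝ)^2) / (3*h))) / ((4*h).choose (2*h) : ℝ) := by
            gcongr
        _ = (((2*h).choose h : ℝ)^2 / ((4*h).choose (2*h) : ℝ)) * Real.exp (-(4*(a:ℝ)^2) / (3*h)) := by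
            ring
        _ ≤ (Real.exp 16 / u) * Real.exp (-(4*(a:ℝ)^2) / (3*h)) :=
            mul_le_mul_of_nonneg_right (pGmax_le n h hn hn256) (Real.exp_nonneg _)
    have hjsq : (j:ℝ)^2 = (a:ℝ)^2 := by
      rw [← sq_abs, habs]
    have hexpbound : -(4*(a:ℝ)^2) / (3*h) + 16 * (a:ℝ)^2 / (3 * n * L)
        ≤ -(4/3) * sL + (-(4/(3*u))) * a := by
      have hstep1 : -(4*(a:ℝ)^2) / (3*h) + 16 * (a:ℝ)^2 / (3 * n * L) ≤ -(8*(a:ℝ)^2) / (3*n) := by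
        have e1 : -(4*(a:ℝ)^2) / (3*(h:ℝ)) = -(16*(a:ℝ)^2) / (3*n) := by
          rw [hnR]; field_simp; ring
        rw [e1]
        have e2 : 16 * (a:ℝ)^2 / (3 * n * L) ≤ 8 * (a:ℝ)^2 / (3*n) := by
          have h16L : 16/L ≤ 8 := by
            rw [div_le_iff₀ hL0]; linarith
          calc 16 * (a:ℝ)^2 / (3 * n * L) = (16/L) * ((a:ℝ)^2/(3*n)) := by
                ring
            _ ≤ 8 * ((a:ℝ)^2/(3*n)) := mul_le_mul_of_nonneg_right h16L (by positivity)
            _ = 8 * (a:ℝ)^2 / (3*n) := by ring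
        have e3 : -(16*(a:ℝ)^2) / (3*(n:ℝ)) + 8*(a:ℝ)^2/(3*n) = -(8*(a:ℝ)^2) / (3*n) := by
          field_simp; ring
        linarith
      have hstep2 : -(8*(a:ℝ)^2) / (3*(n:ℝ)) ≤ -(4/3) * sL + (-(4/(3*u))) * a := by
        rw [← sub_nonneg]
        have hn_eq : (n:ℝ) = u^2 := hu2.symm
        have hsLe : sL = (t0 n)^2 / u^2 := by
          rw [ht0sq, hn_eq]; field_simp
        have e4 : -(4/3) * sL + (-(4/(3*u))) * a - (-(8*(a:ℝ)^2) / (3*(n:ℝ)))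
            = (8*(a:ℝ)^2 - 4*(t0 n)^2 - 4*u*(a:ℝ))/(3*u^2) := by
          rw [hn_eq, hsLe]
          field_simp
          ring
        rw [e4]
        apply div_nonneg _ (by positivity)
        have hta : t0 n ^ 2 ≤ (a:ℝ)^2 := pow_le_pow_left₀ ht0pos.le hj1.le 2
        have hua : u*(a:ℝ) ≤ (a:ℝ)^2 := by
          rw [sq]
          exact mul_le_mul_of_nonneg_right (le_trans ht0u hj1.le) (Nat.cast_nonneg a)
        linarith
      linarith
    calc pG n (((n / 4 : ℕ) : ℤ) - j) * Real.exp (16 * (j : ℝ) ^ 2 / (3 * n * L))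
        ≤ ((Real.exp 16 / u) * Real.exp (-(4*(a:ℝ)^2) / (3*h))) * Real.exp (16 * (a : ℝ) ^ 2 / (3 * n * L)) := by
          rw [hjsq]
          apply mul_le_mul_of_nonneg_right hpGle (Real.exp_nonneg _)
      _ = (Real.exp 16 / u) * Real.exp (-(4*(a:ℝ)^2) / (3*h) + 16 * (a : ℝ) ^ 2 / (3 * n * L)) := by
          rw [mul_assoc, ← Real.exp_add]
      _ ≤ (Real.exp 16 / u) * Real.exp (-(4/3) * sL + (-(4/(3*u))) * a) := by
          apply mul_le_mul_of_nonneg_left (Real.exp_le_exp.mpr hexpbound) (by positivity)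
      _ = Q * r ^ a := by
          rw [hQdef, hrdef, Real.exp_add, ← Real.exp_nat_mul]
          ring_nf
  -- sum it up
  have hsum1 : tailSum 3 n ≤ Q * ∑ j ∈ Finset.Icc (-(n:ℤ)) (n:ℤ), r ^ j.natAbs := by
    rw [tailSum]
    calc ∑ j ∈ (Finset.Icc (-(n : ℤ)) (n : ℤ)).filter
          (fun j : ℤ => t0 n < |(j : ℝ)| ∧ |(j : ℝ)| ≤ (n : ℝ) / 8),
          pG n (((n / 4 : ℕ) : ℤ) - j) * Real.exp (16 * (j : ℝ) ^ 2 / (3 * n * Real.log n))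
        ≤ ∑ j ∈ (Finset.Icc (-(n : ℤ)) (n : ℤ)).filter
          (fun j : ℤ => t0 n < |(j : ℝ)| ∧ |(j : ℝ)| ≤ (n : ℝ) / 8), Q * r ^ j.natAbs :=
          Finset.sum_le_sum hpoint
      _ ≤ ∑ j ∈ Finset.Icc (-(n:ℤ)) (n:ℤ), Q * r ^ j.natAbs := by
          apply Finset.sum_le_sum_of_subset_of_nonneg (Finset.filter_subset _ _)
          intro j _ _
          positivity
      _ = Q * ∑ j ∈ Finset.Icc (-(n:ℤ)) (n:ℤ), r ^ j.natAbs := by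
          rw [Finset.mul_sum]
  have hgeo : ∑ j ∈ Finset.Icc (-(n:ℤ)) (n:ℤ), r ^ j.natAbs ≤ 3*u := by
    have h1 := sum_abs_geom n r hr0 hr1
    have hx : (0:ℝ) < 4/(3*u) := by positivity
    have hxle : 4/(3*u) ≤ 1 := by
      rw [div_le_one (by positivity)]
      linarith
    have hrle : r ≤ 1 - 2/(3*u) := by
      rw [hrdef]
      have hex : Real.exp (-(4/(3*u))) ≤ 1/(1 + 4/(3*u)) := by
        rw [Real.exp_neg, inv_eq_one_div]
        apply one_div_le_one_div_of_le (by linarith)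
        linarith [Real.add_one_le_exp (4/(3*u))]
      have h2 : 1/(1 + 4/(3*u)) ≤ 1 - 2/(3*u) := by
        rw [div_le_iff₀ (by linarith)]
        have hu2' : (0:ℝ) < 3*u := by positivity
        have e : (1 - 2/(3*u)) * (1 + 4/(3*u)) - 1 = (2/(3*u)) * (1 - 4/(3*u)) := by
          field_simp
          ring
        linarith [e, mul_nonneg (le_of_lt (show (0:ℝ) < 2/(3*u) by positivity)) (show (0:ℝ) ≤ 1 - 4/(3*u) by linarith)]
      linarith
    have h1mr : 2/(3*u) ≤ 1 - r := by linarith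
    have h1mrpos : (0:ℝ) < 2/(3*u) := by positivity
    calc ∑ j ∈ Finset.Icc (-(n:ℤ)) (n:ℤ), r ^ j.natAbs
        ≤ 2/(1-r) := h1
      _ ≤ 2/(2/(3*u)) := by
          apply div_le_div_of_nonneg_left (by norm_num) h1mrpos h1mr
      _ = 3*u := by
          field_simp
  have hQu : Q * (3*u) = 3 * Real.exp 16 * Real.exp (-(4/3) * sL) := by
    rw [hQdef]
    field_simp
  have hfinal : 3 * Real.exp 16 * Real.exp (-(4/3) * sL) ≤ Real.exp (-(1/3) * sL) := by
    have h3 : (3:ℝ) ≤ Real.exp 2 := by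
      rw [show (2:ℝ) = 1+1 by norm_num, Real.exp_add]
      nlinarith [Real.exp_one_gt_d9]
    calc 3 * Real.exp 16 * Real.exp (-(4/3) * sL)
        ≤ Real.exp 2 * Real.exp 16 * Real.exp (-(4/3) * sL) := by
          apply mul_le_mul_of_nonneg_right (mul_le_mul_of_nonneg_right h3 (Real.exp_nonneg _)) (Real.exp_nonneg _)
      _ = Real.exp (18 + (-(4/3) * sL)) := by
          rw [← Real.exp_add, ← Real.exp_add]
          norm_num
      _ ≤ Real.exp (-(1/3) * sL) := by
          apply Real.exp_le_exp.mpr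
          linarith
  calc tailSum 3 n ≤ Q * ∑ j ∈ Finset.Icc (-(n:ℤ)) (n:ℤ), r ^ j.natAbs := hsum1
    _ ≤ Q * (3*u) := mul_le_mul_of_nonneg_left hgeo hQ0
    _ = 3 * Real.exp 16 * Real.exp (-(4/3) * sL) := hQu
    _ ≤ Real.exp (-(1/3) * sL) := hfinal


lemma tailSum_nonneg (C3 : ℝ) (n : ℕ) : 0 ≤ tailSum C3 n := by
  rw [tailSum]
  apply Finset.sum_nonneg
  intro j _
  apply mul_nonneg _ (Real.exp_nonneg _)
  rw [pG]
  split
  · positivity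
  · exact le_refl 0

theorem tail_sum_small :
    ∃ C3 : ℝ, 0 < C3 ∧ ∃ c : ℝ, 0 < c ∧
      (∃ N : ℕ, ∀ n : ℕ, N ≤ n → 4 ∣ n →
          tailSum C3 n ≤ Real.exp (-c * Real.sqrt (Real.log n))) ∧
      Tendsto (fun k : ℕ => tailSum C3 (4 * k)) atTop (nhds 0) := by
  have hbound : ∀ n : ℕ, ⌈Real.exp 2000⌉₊ ≤ n → 4 ∣ n →
      tailSum 3 n ≤ Real.exp (-(1/3) * Real.sqrt (Real.log n)) := by
    intro n hNn hdvd
    have hexp : Real.exp 2000 ≤ (n:ℝ) := by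
      calc Real.exp 2000 ≤ (⌈Real.exp 2000⌉₊ : ℝ) := Nat.le_ceil _
        _ ≤ n := by exact_mod_cast hNn
    have h2001 : (2001:ℝ) ≤ Real.exp 2000 := by
      have := Real.add_one_le_exp (2000:ℝ)
      linarith
    have h256 : 256 ≤ n := by
      have : (256:ℝ) ≤ (n:ℝ) := by linarith
      exact_mod_cast this
    have hnposR : (0:ℝ) < n := by
      have : (0:ℝ) < 256 := by norm_num
      have h' : (256:ℝ) ≤ (n:ℝ) := by linarith
      linarith
    have hL : (2000:ℝ) ≤ Real.log n := (Real.le_log_iff_exp_le hnposR).mpr hexp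
    exact main_bound n h256 hL hdvd
  refine ⟨3, by norm_num, 1/3, by norm_num, ⟨⌈Real.exp 2000⌉₊, hbound⟩, ?_⟩
  -- tendsto part
  have hupper : ∀ᶠ k : ℕ in atTop,
      tailSum 3 (4*k) ≤ Real.exp (-(1/3) * Real.sqrt (Real.log ((4*k : ℕ) : ℝ))) := by
    filter_upwards [eventually_ge_atTop (⌈Real.exp 2000⌉₊)] with k hk
    exact hbound (4*k) (le_trans hk (by omega)) ⟨k, rfl⟩
  have hlower : ∀ᶠ k : ℕ in atTop, (0:ℝ) ≤ tailSum 3 (4*k) := by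
    filter_upwards with k
    exact tailSum_nonneg 3 (4*k)
  have t1 : Tendsto (fun k : ℕ => ((4*k : ℕ) : ℝ)) atTop atTop := by
    apply tendsto_natCast_atTop_atTop.comp
    exact tendsto_atTop_mono (fun k => by simp only [id_eq]; omega) tendsto_id
  have t2 : Tendsto (fun k : ℕ => Real.log ((4*k : ℕ) : ℝ)) atTop atTop :=
    Real.tendsto_log_atTop.comp t1
  have t3 : Tendsto Real.sqrt atTop atTop := by
    rw [show Real.sqrt = fun x : ℝ => x ^ ((1:ℝ)/2) from funext fun x => Real.sqrt_eq_rpow x]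
    exact tendsto_rpow_atTop (by norm_num)
  have t4 : Tendsto (fun k : ℕ => Real.sqrt (Real.log ((4*k : ℕ) : ℝ))) atTop atTop :=
    t3.comp t2
  have t5 : Tendsto (fun x : ℝ => -(1/3) * x) atTop atBot := by
    have h13 : Tendsto (fun x : ℝ => (1/3) * x) atTop atTop :=
      Tendsto.const_mul_atTop (by norm_num) tendsto_id
    have := Filter.tendsto_neg_atTop_atBot.comp h13
    refine this.congr (fun x => ?_)
    simp only [Function.comp_apply]
    ring
  have t6 : Tendsto (fun k : ℕ => Real.exp (-(1/3) * Real.sqrt (Real.log ((4*k : ℕ) : ℝ))))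
      atTop (nhds 0) :=
    Real.tendsto_exp_atBot.comp (t5.comp t4)
  exact tendsto_of_tendsto_of_tendsto_of_le_of_le' tendsto_const_nhds t6 hlower hupper
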